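/- Let T(n+1,n), n ∈ ℤ, be a family of evolution operators on a Banach space X admitting exponential dichotomies of finite rank on ℤ⁺ and on ℤ⁻ with projections P⁺(n) and P⁻(n). An element Ψ₀ ∈ X* belongs to (R(P⁻(0)))^⊥ ∩ (R(I − P⁺(0)))^⊥ if and only if there exists a bounded sequence (Ψ(m))_{m∈ℤ} in X* with Ψ(0) = Ψ₀ and Ψ(m) = (T(m+1,m))* Ψ(m+1) for all m ∈ ℤ. In this case Ψ(m) belongs to R(I − (P⁻(m))*) for m ≤ 0 and to R((P⁺(m))*) for m ≥ 0. -/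

import Mathlib

open Set

variable {X : Type*} [NormedAddCommGroup X] [NormedSpace ℝ X] [CompleteSpace X]

/-- The evolution operators `T(n,m) = T_{n-1} ∘ ⋯ ∘ T_m` (for `n ≥ m`) associated with a
family of one-step operators `T k = T(k+1,k)`. -/
noncomputable def evolOp (T : ℤ → X →L[ℝ] X) (n m : ℤ) : X →L[ℝ] X :=
  (List.range (n - m).toNat).foldl (fun A k => (T (m + k)).comp A) (ContinuousLinearMap.id ℝ X)

/-- A (discrete) exponential dichotomy on an interval `J ⊆ ℤ` with exponent `β`, bound `M`
and projections `P n`, for the evolution family generated by the one-step operators `T n`.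
`P n` projects onto the unstable part: `(iii)` forward decay on the ranges of `I - P n`;
`(iv)` backward decay (`T(n,m)` is invertible from `R(P m)` onto `R(P n)` with inverse of
norm at most `M e^{-β(n-m)}`). -/
structure ExpDichotomyOn (T : ℤ → X →L[ℝ] X) (J : Set ℤ) (β M : ℝ)
    (P : ℤ → X →L[ℝ] X) : Prop where
  beta_pos : 0 < β
  bound_pos : 0 < M
  isProj : ∀ n ∈ J, (P n).comp (P n) = P n
  commute : ∀ m ∈ J, ∀ n ∈ J, m ≤ n →
    (P n).comp (evolOp T n m) = (evolOp T n m).comp (P m)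
  isoRange : ∀ m ∈ J, ∀ n ∈ J, m ≤ n →
    ⇑(evolOp T n m) '' Set.range (P m) = Set.range (P n)
  stable : ∀ m ∈ J, ∀ n ∈ J, m ≤ n → ∀ x : X,
    ‖evolOp T n m (x - P m x)‖ ≤ M * Real.exp (-β * ((n - m : ℤ) : ℝ)) * ‖x‖
  unstable : ∀ m ∈ J, ∀ n ∈ J, m ≤ n → ∀ x w : X, w ∈ Set.range (P m) →
    evolOp T n m w = P n x → ‖w‖ ≤ M * Real.exp (-β * ((n - m : ℤ) : ℝ)) * ‖x‖

/-- The dichotomy with projections `P` has finite rank `k` on `J`. -/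
def DichotomyRankOn (P : ℤ → X →L[ℝ] X) (J : Set ℤ) (k : ℕ) : Prop :=
  ∀ n ∈ J, FiniteDimensional ℝ (LinearMap.range (P n : X →ₗ[ℝ] X)) ∧
    Module.finrank ℝ (LinearMap.range (P n : X →ₗ[ℝ] X)) = k

/-- The Banach-space adjoint (dual map) of a continuous linear operator. -/
noncomputable def dualOp (f : X →L[ℝ] X) :
    StrongDual ℝ X →L[ℝ] StrongDual ℝ X :=
  (ContinuousLinearMap.compL ℝ X X ℝ).flip f

set_option linter.unusedSectionVars false
set_option maxHeartbeats 1000000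

lemma dualOp_apply (f : X →L[ℝ] X) (ψ : StrongDual ℝ X) : dualOp f ψ = ψ.comp f := rfl

lemma evolOp_self (T : ℤ → X →L[ℝ] X) (m : ℤ) : evolOp T m m = ContinuousLinearMap.id ℝ X := by
  simp [evolOp]

lemma evolOp_succ (T : ℤ → X →L[ℝ] X) {m n : ℤ} (h : m ≤ n) :
    evolOp T (n+1) m = (T n).comp (evolOp T n m) := by
  unfold evolOp
  have h1 : (n + 1 - m).toNat = (n - m).toNat + 1 := by omega
  simp only [h1, List.range_succ]
  simp
  rw [show m + ((n - m) ⊔ 0) = n from by omega]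

lemma evolOp_comp (T : ℤ → X →L[ℝ] X) {m k n : ℤ} (h1 : m ≤ k) (h2 : k ≤ n) :
    (evolOp T n k).comp (evolOp T k m) = evolOp T n m := by
  refine Int.le_induction (motive := fun n _ => (evolOp T n k).comp (evolOp T k m) = evolOp T n m) ?_ ?_ n h2
  · show (evolOp T k k).comp (evolOp T k m) = evolOp T k m
    rw [evolOp_self, ContinuousLinearMap.id_comp]
  · intro n hn ih
    show (evolOp T (n+1) k).comp (evolOp T k m) = evolOp T (n+1) m
    rw [evolOp_succ T hn, evolOp_succ T (h1.trans hn), ContinuousLinearMap.comp_assoc, ih]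

lemma evolOp_one (T : ℤ → X →L[ℝ] X) (m : ℤ) : evolOp T (m+1) m = T m := by
  rw [evolOp_succ T le_rfl, evolOp_self, ContinuousLinearMap.comp_id]

lemma proj_range_mem {P : X →L[ℝ] X} (hP : P.comp P = P) {y : X} :
    y ∈ Set.range P ↔ P y = y := by
  constructor
  · rintro ⟨x, rfl⟩
    rw [← ContinuousLinearMap.comp_apply, hP]
  · exact fun h => ⟨y, h⟩

lemma eq_zero_of_le_geom {r A β : ℝ} (hβ : 0 < β)
    (h : ∀ k : ℕ, |r| ≤ A * Real.exp (-β * k)) : r = 0 := by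
  have hlt : Real.exp (-β) < 1 := Real.exp_lt_one_iff.mpr (by linarith)
  have htend : Filter.Tendsto (fun k : ℕ => A * Real.exp (-β) ^ k) Filter.atTop (nhds 0) := by
    have := (tendsto_pow_atTop_nhds_zero_of_lt_one (Real.exp_nonneg (-β)) hlt).const_mul A
    simpa using this
  have h' : ∀ k : ℕ, |r| ≤ A * Real.exp (-β) ^ k := by
    intro k
    have hk := h k
    rw [← Real.exp_nat_mul, mul_comm ((k:ℝ)) (-β)]
    exact hk
  have : |r| ≤ 0 := le_of_tendsto_of_tendsto' tendsto_const_nhds htend h'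
  exact abs_eq_zero.mp (le_antisymm this (abs_nonneg r))

lemma sol_eq (T : ℤ → X →L[ℝ] X) (Ψ : ℤ → StrongDual ℝ X)
    (hrec : ∀ m : ℤ, Ψ m = dualOp (T m) (Ψ (m + 1))) :
    ∀ m n : ℤ, m ≤ n → ∀ x : X, Ψ m x = Ψ n (evolOp T n m x) := by
  intro m n h
  refine Int.le_induction (motive := fun n _ => ∀ x : X, Ψ m x = Ψ n (evolOp T n m x)) ?_ ?_ n h
  · intro x; rw [evolOp_self]; rfl
  · intro n hn ih x
    show Ψ m x = Ψ (n+1) (evolOp T (n+1) m x)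
    rw [ih x, hrec n, dualOp_apply, ContinuousLinearMap.comp_apply,
      evolOp_succ T hn, ContinuousLinearMap.comp_apply]

lemma keyB1 {T : ℤ → X →L[ℝ] X} {βp Mp : ℝ} {Pp : ℤ → X →L[ℝ] X}
    (hp : ExpDichotomyOn T (Set.Ici 0) βp Mp Pp)
    {Ψ : ℤ → StrongDual ℝ X} {C : ℝ} (hC : ∀ m : ℤ, ‖Ψ m‖ ≤ C)
    (hrec : ∀ m : ℤ, Ψ m = dualOp (T m) (Ψ (m + 1))) :
    ∀ m : ℤ, 0 ≤ m → ∀ x : X, Ψ m (x - Pp m x) = 0 := by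
  intro m hm0 x
  have hC0 : (0:ℝ) ≤ C := le_trans (norm_nonneg _) (hC 0)
  refine eq_zero_of_le_geom (A := C * Mp * ‖x‖) hp.beta_pos ?_
  intro k
  have hz := hp.stable m (Set.mem_Ici.mpr hm0) (m + k) (Set.mem_Ici.mpr (by omega)) (by omega) x
  rw [show m + (k:ℤ) - m = (k:ℤ) from by omega] at hz
  rw [sol_eq T Ψ hrec m (m + k) (by omega) (x - Pp m x), ← Real.norm_eq_abs]
  calc ‖Ψ (m+k) (evolOp T (m+k) m (x - Pp m x))‖
      ≤ ‖Ψ (m+k)‖ * ‖evolOp T (m+k) m (x - Pp m x)‖ := (Ψ (m+k)).le_opNorm _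
    _ ≤ C * (Mp * Real.exp (-βp * ((k:ℤ):ℝ)) * ‖x‖) :=
        mul_le_mul (hC _) hz (norm_nonneg _) hC0
    _ = C * Mp * ‖x‖ * Real.exp (-βp * (k:ℝ)) := by push_cast; ring

lemma keyB2 {T : ℤ → X →L[ℝ] X} {βm Mm : ℝ} {Pm : ℤ → X →L[ℝ] X}
    (hm : ExpDichotomyOn T (Set.Iic 0) βm Mm Pm)
    {Ψ : ℤ → StrongDual ℝ X} {C : ℝ} (hC : ∀ m : ℤ, ‖Ψ m‖ ≤ C)
    (hrec : ∀ m : ℤ, Ψ m = dualOp (T m) (Ψ (m + 1))) :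
    ∀ m : ℤ, m ≤ 0 → ∀ x : X, Ψ m (Pm m x) = 0 := by
  intro m hm0 x
  have hC0 : (0:ℝ) ≤ C := le_trans (norm_nonneg _) (hC 0)
  refine eq_zero_of_le_geom (A := C * Mm * ‖x‖) hm.beta_pos ?_
  intro k
  have hx : Pm m x ∈ Set.range (Pm m) := ⟨x, rfl⟩
  rw [← hm.isoRange (m - k) (Set.mem_Iic.mpr (by omega)) m (Set.mem_Iic.mpr hm0) (by omega)] at hx
  obtain ⟨w, hw, hweq⟩ := hx
  have hnw := hm.unstable (m - k) (Set.mem_Iic.mpr (by omega)) m (Set.mem_Iic.mpr hm0)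
    (by omega) x w hw hweq
  rw [show m - (m - (k:ℤ)) = (k:ℤ) from by omega] at hnw
  rw [← hweq, ← sol_eq T Ψ hrec (m - k) m (by omega) w, ← Real.norm_eq_abs]
  calc ‖Ψ (m - k) w‖ ≤ ‖Ψ (m - k)‖ * ‖w‖ := (Ψ (m - k)).le_opNorm _
    _ ≤ C * (Mm * Real.exp (-βm * ((k:ℤ):ℝ)) * ‖x‖) :=
        mul_le_mul (hC _) hnw (norm_nonneg _) hC0
    _ = C * Mm * ‖x‖ * Real.exp (-βm * (k:ℝ)) := by push_cast; ring
lemma exists_sol {T : ℤ → X →L[ℝ] X} {βp Mp βm Mm : ℝ} {Pp Pm : ℤ → X →L[ℝ] X}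
    (hp : ExpDichotomyOn T (Set.Ici 0) βp Mp Pp)
    (hm : ExpDichotomyOn T (Set.Iic 0) βm Mm Pm)
    {Ψ₀ : StrongDual ℝ X}
    (hann1 : ∀ x : X, Ψ₀ (Pm 0 x) = 0) (hann2 : ∀ x : X, Ψ₀ (x - Pp 0 x) = 0) :
    ∃ Ψ : ℤ → StrongDual ℝ X, (∃ C : ℝ, ∀ m : ℤ, ‖Ψ m‖ ≤ C) ∧ Ψ 0 = Ψ₀ ∧
      ∀ m : ℤ, Ψ m = dualOp (T m) (Ψ (m + 1)) := by
  have hPp0 := hp.isProj 0 (Set.mem_Ici.mpr le_rfl)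
  have exw : ∀ m : ℤ, 0 ≤ m → ∀ x : X, ∃ w, Pp 0 w = w ∧ evolOp T m 0 w = Pp m x := by
    intro m hm0 x
    have hx : Pp m x ∈ Set.range (Pp m) := ⟨x, rfl⟩
    rw [← hp.isoRange 0 (Set.mem_Ici.mpr le_rfl) m (Set.mem_Ici.mpr hm0) hm0] at hx
    obtain ⟨w, hw, hweq⟩ := hx
    exact ⟨w, (proj_range_mem hPp0).mp hw, hweq⟩
  have normw : ∀ m : ℤ, 0 ≤ m → ∀ x w : X, Pp 0 w = w → evolOp T m 0 w = Pp m x →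
      ‖w‖ ≤ Mp * Real.exp (-βp * (m:ℝ)) * ‖x‖ := by
    intro m hm0 x w h1 h2
    have := hp.unstable 0 (Set.mem_Ici.mpr le_rfl) m (Set.mem_Ici.mpr hm0) hm0 x w ⟨w, h1⟩ h2
    simpa using this
  have uniqw : ∀ m : ℤ, 0 ≤ m → ∀ x w1 w2 : X, Pp 0 w1 = w1 → evolOp T m 0 w1 = Pp m x →
      Pp 0 w2 = w2 → evolOp T m 0 w2 = Pp m x → w1 = w2 := by
    intro m hm0 x w1 w2 ha1 ha2 hb1 hb2
    have h1 : Pp 0 (w1 - w2) = w1 - w2 := by rw [map_sub, ha1, hb1]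
    have h2 : evolOp T m 0 (w1 - w2) = Pp m 0 := by
      rw [map_sub, ha2, hb2, sub_self, map_zero]
    have h3 := normw m hm0 0 (w1 - w2) h1 h2
    simp only [norm_zero, mul_zero] at h3
    exact sub_eq_zero.mp (norm_le_zero_iff.mp h3)
  have key : ∀ m : ℤ, 0 ≤ m → ∃ ψ : StrongDual ℝ X, ‖ψ‖ ≤ ‖Ψ₀‖ * Mp ∧
      ∀ x w : X, Pp 0 w = w → evolOp T m 0 w = Pp m x → ψ x = Ψ₀ w := by
    intro m hm0
    choose wf hwf1 hwf2 using exw m hm0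
    have hexple : Real.exp (-βp * (m:ℝ)) ≤ 1 := by
      refine Real.exp_le_one_iff.mpr ?_
      have h1 : (0:ℝ) ≤ (m:ℝ) := by exact_mod_cast hm0
      nlinarith [hp.beta_pos]
    have hb : ∀ x : X, ‖Ψ₀ (wf x)‖ ≤ ‖Ψ₀‖ * Mp * ‖x‖ := by
      intro x
      have h1 := normw m hm0 x (wf x) (hwf1 x) (hwf2 x)
      calc ‖Ψ₀ (wf x)‖ ≤ ‖Ψ₀‖ * ‖wf x‖ := Ψ₀.le_opNorm _
        _ ≤ ‖Ψ₀‖ * (Mp * Real.exp (-βp * (m:ℝ)) * ‖x‖) :=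
            mul_le_mul_of_nonneg_left h1 (norm_nonneg _)
        _ ≤ ‖Ψ₀‖ * (Mp * ‖x‖) := by
            refine mul_le_mul_of_nonneg_left ?_ (norm_nonneg _)
            refine mul_le_mul_of_nonneg_right ?_ (norm_nonneg _)
            calc Mp * Real.exp (-βp * (m:ℝ)) ≤ Mp * 1 :=
                  mul_le_mul_of_nonneg_left hexple hp.bound_pos.le
              _ = Mp := mul_one Mp
        _ = ‖Ψ₀‖ * Mp * ‖x‖ := by ring
    have hadd : ∀ x y : X, wf (x + y) = wf x + wf y := by
      intro x y
      refine uniqw m hm0 (x + y) _ _ (hwf1 _) (hwf2 _) ?_ ?_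
      · rw [map_add, hwf1, hwf1]
      · rw [map_add, hwf2, hwf2, map_add]
    have hsmul : ∀ (c : ℝ) (x : X), wf (c • x) = c • wf x := by
      intro c x
      refine uniqw m hm0 (c • x) _ _ (hwf1 _) (hwf2 _) ?_ ?_
      · rw [map_smul, hwf1]
      · rw [map_smul, hwf2, map_smul]
    refine ⟨LinearMap.mkContinuous
      { toFun := fun x => Ψ₀ (wf x)
        map_add' := fun x y => by
          show Ψ₀ (wf (x + y)) = Ψ₀ (wf x) + Ψ₀ (wf y)
          rw [hadd, map_add]
        map_smul' := fun c x => by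
          show Ψ₀ (wf (c • x)) = c • Ψ₀ (wf x)
          rw [hsmul, map_smul] }
      (‖Ψ₀‖ * Mp) hb,
      LinearMap.mkContinuous_norm_le _ (mul_nonneg (norm_nonneg _) hp.bound_pos.le) _, ?_⟩
    intro x w h1 h2
    have hwx : w = wf x := uniqw m hm0 x w (wf x) h1 h2 (hwf1 x) (hwf2 x)
    show Ψ₀ (wf x) = Ψ₀ w
    rw [hwx]
  choose ψf hψf1 hψf2 using key
  obtain ⟨Ψ, hpos, hneg⟩ : ∃ Ψ : ℤ → StrongDual ℝ X,
      (∀ m (h : 0 ≤ m), Ψ m = ψf m h) ∧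
      (∀ m : ℤ, ¬ 0 ≤ m → Ψ m = Ψ₀.comp (evolOp T 0 m)) :=
    ⟨fun m => if h : 0 ≤ m then ψf m h else Ψ₀.comp (evolOp T 0 m),
      fun m h => dif_pos h, fun m h => dif_neg h⟩
  have hΨ0 : Ψ 0 = Ψ₀ := by
    rw [hpos 0 le_rfl]
    ext x
    have hproj : Pp 0 (Pp 0 x) = Pp 0 x := by
      rw [← ContinuousLinearMap.comp_apply, hPp0]
    have hev : evolOp T 0 0 (Pp 0 x) = Pp 0 x := by rw [evolOp_self]; rfl
    rw [hψf2 0 le_rfl x (Pp 0 x) hproj hev]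
    have h2 := hann2 x
    rw [map_sub] at h2
    show Ψ₀ (Pp 0 x) = Ψ₀ x
    linarith
  have hle : ∀ m : ℤ, m ≤ 0 → Ψ m = Ψ₀.comp (evolOp T 0 m) := by
    intro m hm0
    rcases lt_or_eq_of_le hm0 with h | h
    · exact hneg m (by omega)
    · subst h; rw [hΨ0, evolOp_self, ContinuousLinearMap.comp_id]
  refine ⟨Ψ, ⟨‖Ψ₀‖ * Mp + ‖Ψ₀‖ * Mm, ?_⟩, hΨ0, ?_⟩
  · intro m
    rcases le_or_gt 0 m with h | h
    · rw [hpos m h]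
      have := hψf1 m h
      nlinarith [norm_nonneg Ψ₀, hm.bound_pos]
    · rw [hle m h.le]
      have hb : ‖Ψ₀.comp (evolOp T 0 m)‖ ≤ ‖Ψ₀‖ * Mm := by
        refine ContinuousLinearMap.opNorm_le_bound _ (mul_nonneg (norm_nonneg _) hm.bound_pos.le) ?_
        intro x
        have hmem : m ∈ Set.Iic (0:ℤ) := Set.mem_Iic.mpr h.le
        have hz : Ψ₀ (evolOp T 0 m (Pm m x)) = 0 := by
          have hmem0 : evolOp T 0 m (Pm m x) ∈ Set.range (Pm 0) := by
            rw [← hm.isoRange m hmem 0 (Set.mem_Iic.mpr le_rfl) h.le]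
            exact ⟨Pm m x, ⟨x, rfl⟩, rfl⟩
          obtain ⟨y, hy⟩ := hmem0
          rw [← hy]; exact hann1 y
        have heq : Ψ₀ (evolOp T 0 m x) = Ψ₀ (evolOp T 0 m (x - Pm m x)) := by
          rw [map_sub, map_sub, hz, sub_zero]
        have hst := hm.stable m hmem 0 (Set.mem_Iic.mpr le_rfl) h.le x
        have hexp : Real.exp (-βm * ((0 - m : ℤ):ℝ)) ≤ 1 := by
          refine Real.exp_le_one_iff.mpr ?_
          have h1 : (0:ℝ) ≤ ((0 - m : ℤ):ℝ) := by exact_mod_cast (by omega : (0:ℤ) ≤ 0 - m)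
          nlinarith [hm.beta_pos]
        show ‖Ψ₀ (evolOp T 0 m x)‖ ≤ ‖Ψ₀‖ * Mm * ‖x‖
        rw [heq]
        calc ‖Ψ₀ (evolOp T 0 m (x - Pm m x))‖
            ≤ ‖Ψ₀‖ * ‖evolOp T 0 m (x - Pm m x)‖ := Ψ₀.le_opNorm _
          _ ≤ ‖Ψ₀‖ * (Mm * Real.exp (-βm * ((0 - m : ℤ):ℝ)) * ‖x‖) :=
              mul_le_mul_of_nonneg_left hst (norm_nonneg _)
          _ ≤ ‖Ψ₀‖ * (Mm * ‖x‖) := by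
              refine mul_le_mul_of_nonneg_left ?_ (norm_nonneg _)
              refine mul_le_mul_of_nonneg_right ?_ (norm_nonneg _)
              calc Mm * Real.exp (-βm * ((0 - m : ℤ):ℝ)) ≤ Mm * 1 :=
                    mul_le_mul_of_nonneg_left hexp hm.bound_pos.le
                _ = Mm := mul_one Mm
          _ = ‖Ψ₀‖ * Mm * ‖x‖ := by ring
      nlinarith [norm_nonneg Ψ₀, hp.bound_pos]
  · intro m
    ext x
    rw [dualOp_apply, ContinuousLinearMap.comp_apply]
    rcases le_or_gt 0 m with h | h
    · obtain ⟨w, hw1, hw2⟩ := exw m h x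
      have hw2' : evolOp T (m+1) 0 w = Pp (m+1) (T m x) := by
        rw [evolOp_succ T h, ContinuousLinearMap.comp_apply, hw2]
        have hc := hp.commute m (Set.mem_Ici.mpr h) (m+1) (Set.mem_Ici.mpr (by omega)) (by omega)
        rw [evolOp_one] at hc
        exact (ContinuousLinearMap.ext_iff.mp hc x).symm
      rw [hpos m h, hpos (m+1) (by omega), hψf2 m h x w hw1 hw2,
        hψf2 (m+1) (by omega) (T m x) w hw1 hw2']
    · rw [hle m h.le, hle (m+1) (by omega), ContinuousLinearMap.comp_apply,
        ContinuousLinearMap.comp_apply]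
      congr 1
      rw [← evolOp_comp T (show m ≤ m+1 by omega) (show m+1 ≤ 0 by omega),
        ContinuousLinearMap.comp_apply, evolOp_one]

/-- **Bounded full-line solutions of the adjoint equation.**  Let `T(n+1,n)` admit
exponential dichotomies of finite ranks on `ℤ⁺` and `ℤ⁻` with projections `P⁺(n)` and
`P⁻(n)`.  Then `Ψ₀ ∈ (R(P⁻(0)))^⊥ ∩ (R(I − P⁺(0)))^⊥` if and only if there is a bounded
sequence `(Ψ(m))_{m∈ℤ}` in `X*` with `Ψ(0) = Ψ₀` and `Ψ(m) = (T(m+1,m))* Ψ(m+1)` for all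
`m`; in this case `Ψ(m) ∈ R(I − (P⁻(m))*)` for `m ≤ 0` and `Ψ(m) ∈ R((P⁺(m))*)` for
`m ≥ 0`. -/
theorem bounded_adjoint_solutions_iff_annihilator
    (T : ℤ → X →L[ℝ] X)
    (βp Mp βm Mm : ℝ) (Pp Pm : ℤ → X →L[ℝ] X) (kp km : ℕ)
    (hp : ExpDichotomyOn T (Set.Ici 0) βp Mp Pp)
    (hrkp : DichotomyRankOn Pp (Set.Ici 0) kp)
    (hm : ExpDichotomyOn T (Set.Iic 0) βm Mm Pm)
    (hrkm : DichotomyRankOn Pm (Set.Iic 0) km) :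
    (∀ Ψ₀ : StrongDual ℝ X,
      ((∀ x : X, Ψ₀ (Pm 0 x) = 0) ∧ (∀ x : X, Ψ₀ (x - Pp 0 x) = 0)) ↔
        ∃ Ψ : ℤ → StrongDual ℝ X, (∃ C : ℝ, ∀ m : ℤ, ‖Ψ m‖ ≤ C) ∧ Ψ 0 = Ψ₀ ∧
          ∀ m : ℤ, Ψ m = dualOp (T m) (Ψ (m + 1)))
    ∧ ∀ Ψ : ℤ → StrongDual ℝ X, (∃ C : ℝ, ∀ m : ℤ, ‖Ψ m‖ ≤ C) →
        (∀ m : ℤ, Ψ m = dualOp (T m) (Ψ (m + 1))) →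
        (∀ m ≤ (0:ℤ), Ψ m ∈ Set.range (dualOp (ContinuousLinearMap.id ℝ X - Pm m)))
        ∧ (∀ m ≥ (0:ℤ), Ψ m ∈ Set.range (dualOp (Pp m))) := by
  constructor
  · intro Ψ₀
    constructor
    · rintro ⟨h1, h2⟩
      exact exists_sol hp hm h1 h2
    · rintro ⟨Ψ, ⟨C, hC⟩, h0, hrec⟩
      constructor
      · intro x
        have := keyB2 hm hC hrec 0 le_rfl x
        rwa [h0] at this
      · intro x
        have := keyB1 hp hC hrec 0 le_rfl x
        rwa [h0] at this
  · rintro Ψ ⟨C, hC⟩ hrec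
    constructor
    · intro m hm0
      refine ⟨Ψ m, ?_⟩
      ext x
      rw [dualOp_apply, ContinuousLinearMap.comp_apply]
      have he : (ContinuousLinearMap.id ℝ X - Pm m) x = x - Pm m x := rfl
      rw [he, map_sub, keyB2 hm hC hrec m hm0 x, sub_zero]
    · intro m hm0
      refine ⟨Ψ m, ?_⟩
      ext x
      rw [dualOp_apply, ContinuousLinearMap.comp_apply]
      have h := keyB1 hp hC hrec m hm0 x
      rw [map_sub] at h
      show Ψ m (Pp m x) = Ψ m x
      linarith
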